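/- arXiv:2008.07212 — 2 statements merged into one kernel-verified Lean document; each statement's English description precedes it below -/
import Mathlib

section
/- Let 1 ≤ m < n and let B₁, B₂ ⊆ [n]∖[m] be nonempty with B₁ ⊄ B₂ and B₂ ⊄ B₁. Set D = {x ∈ 𝔽₂ⁿ : supp(x) is not a down-closed subset of ℍ(m,n) contained in [m]∪B₁ or in [m]∪B₂}. Then |D| = 2ⁿ − 2^m − 2^{|B₁|} − 2^{|B₂|} + 2^{|B₁∩B₂|} + 1, and for every nonzero u = (v,w) ∈ 𝔽₂ⁿ one has 2·wt(c_{D,u}) = |D| + 2^m·χ₀ + (−1)^{wt(v)}·(2^{|B₁|}χ₁ + 2^{|B₂|}χ₂ − 2^{|B₁∩B₂|}χ₁₂ − 1), where χ₀ = 1 iff v = 0, χ₁ = 1 iff supp(w) ∩ B₁ = ∅, χ₂ = 1 iff supp(w) ∩ B₂ = ∅, and χ₁₂ = 1 iff supp(w) ∩ (B₁∩B₂) = ∅ (each being 0 otherwise). -/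
open Finset

/-- The order relation of the hierarchical poset `ℍ(m,n)` on `Fin n`:
`i ⪯ j` iff `i = j`, or `i` lies in the bottom level `[m]` and `j` in the top level. -/
def Hle (n m : ℕ) (i j : Fin n) : Prop :=
  i = j ∨ ((i : ℕ) < m ∧ m ≤ (j : ℕ))

instance (n m : ℕ) : DecidableRel (Hle n m) := fun i j =>
  decidable_of_iff (i = j ∨ ((i : ℕ) < m ∧ m ≤ (j : ℕ))) Iff.rfl

/-- Down-closed subsets of the hierarchical poset `ℍ(m,n)`. -/
def HDownClosed (n m : ℕ) (S : Finset (Fin n)) : Prop :=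
  ∀ i j : Fin n, Hle n m i j → j ∈ S → i ∈ S

instance (n m : ℕ) : DecidablePred (HDownClosed n m) := fun S =>
  decidable_of_iff (∀ i j : Fin n, Hle n m i j → j ∈ S → i ∈ S) Iff.rfl

/-- The bottom level `[m]` of `ℍ(m,n)`, viewed inside `Fin n`. -/
def lowSet (n m : ℕ) : Finset (Fin n) :=
  Finset.univ.filter (fun i => (i : ℕ) < m)

/-- The support of a vector of `𝔽₂ⁿ`, as a subset of `[n]`. -/
def supp {n : ℕ} (x : Fin n → ZMod 2) : Finset (Fin n) :=
  Finset.univ.filter (fun i => x i ≠ 0)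

/-- The standard inner product on `𝔽₂ⁿ`. -/
def ip {n : ℕ} (u x : Fin n → ZMod 2) : ZMod 2 := ∑ i, u i * x i

/-- The Hamming weight of the codeword `c_{D,u} = (u·x)_{x ∈ D}`. -/
def wtD {n : ℕ} (D : Finset (Fin n → ZMod 2)) (u : Fin n → ZMod 2) : ℕ :=
  (D.filter (fun x => ip u x = 1)).card

/-- The Hamming weight of the codeword `c_f(s,u) = (s·f(x) + u·x)_{x ∈ 𝔽₂ⁿ ∖ {0}}`. -/
def wtF {n : ℕ} (f : (Fin n → ZMod 2) → ZMod 2) (s : ZMod 2) (u : Fin n → ZMod 2) : ℕ :=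
  (Finset.univ.filter (fun x : Fin n → ZMod 2 => x ≠ 0 ∧ s * f x + ip u x = 1)).card

/-- The Hamming weight of the first `m` coordinates of `u` (the part `v` of `u = (v,w)`). -/
def wtLow (n m : ℕ) (u : Fin n → ZMod 2) : ℕ :=
  (Finset.univ.filter (fun i : Fin n => (i : ℕ) < m ∧ u i ≠ 0)).card

lemma zmod2_cases (a : ZMod 2) (h : a ≠ 0) : a = 1 := by revert h; revert a; decide

lemma count_lin {α : Type*} [Fintype α] [DecidableEq α] (u : α → ZMod 2) (ε : ZMod 2) :
    (Finset.univ.filter fun y : α → ZMod 2 => ∑ i, u i * y i = ε).card =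
      if ∀ i, u i = 0 then (if ε = 0 then 2 ^ Fintype.card α else 0) else
        2 ^ (Fintype.card α - 1) := by
  by_cases h : ∀ i, u i = 0
  · rw [if_pos h]
    have hz : ∀ y : α → ZMod 2, (∑ i, u i * y i) = 0 := by
      intro y; simp [h]
    by_cases hε : ε = 0
    · rw [if_pos hε]
      have : (Finset.univ.filter fun y : α → ZMod 2 => ∑ i, u i * y i = ε) = univ := by
        apply Finset.filter_true_of_mem; intro y _; rw [hz, hε]
      rw [this, Finset.card_univ, Fintype.card_fun]
      congr 1
    · rw [if_neg hε]
      have : (Finset.univ.filter fun y : α → ZMod 2 => ∑ i, u i * y i = ε) = ∅ := by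
        apply Finset.filter_false_of_mem; intro y _; rw [hz]; exact fun hh => hε hh.symm
      rw [this, Finset.card_empty]
  · rw [if_neg h]
    push_neg at h
    obtain ⟨i₀, hi₀⟩ := h
    have hu1 : u i₀ = 1 := zmod2_cases _ hi₀
    have hg : ∀ y : α → ZMod 2,
        (∑ i, u i * Function.update y i₀ (y i₀ + 1) i) = (∑ i, u i * y i) + 1 := by
      intro y
      rw [Finset.sum_eq_add_sum_sdiff_singleton_of_mem (Finset.mem_univ i₀)
        (fun i => u i * Function.update y i₀ (y i₀ + 1) i),
        Finset.sum_eq_add_sum_sdiff_singleton_of_mem (Finset.mem_univ i₀) (fun i => u i * y i)]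
      have h2 : ∀ i ∈ Finset.univ \ {i₀}, u i * Function.update y i₀ (y i₀ + 1) i = u i * y i := by
        intro i hi
        rw [Function.update_of_ne (by simpa using (Finset.mem_sdiff.mp hi).2)]
      rw [Finset.sum_congr rfl h2, Function.update_self, hu1]
      ring
    have key : ∀ δ : ZMod 2,
        (Finset.univ.filter fun y : α → ZMod 2 => ∑ i, u i * y i = δ).card =
        (Finset.univ.filter fun y : α → ZMod 2 => ∑ i, u i * y i = δ + 1).card := by
      intro δ
      have hupd : ∀ y : α → ZMod 2,
          Function.update (Function.update y i₀ (y i₀ + 1)) i₀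
            ((Function.update y i₀ (y i₀ + 1)) i₀ + 1) = y := by
        intro y
        funext i
        by_cases hi : i = i₀
        · subst hi
          simp only [Function.update_self]
          have : ∀ a : ZMod 2, a + 1 + 1 = a := by decide
          exact this (y i)
        · simp only [Function.update_of_ne hi]
      refine Finset.card_nbij' (fun y => Function.update y i₀ (y i₀ + 1))
        (fun y => Function.update y i₀ (y i₀ + 1)) ?_ ?_ ?_ ?_
      · intro y hy
        simp only [Finset.mem_coe, Finset.mem_filter, Finset.mem_univ, true_and] at hy ⊢
        rw [hg, hy]
      · intro y hy
        simp only [Finset.mem_coe, Finset.mem_filter, Finset.mem_univ, true_and] at hy ⊢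
        rw [hg, hy]
        have : ∀ a : ZMod 2, a + 1 + 1 = a := by decide
        exact this δ
      · intro y _
        exact hupd y
      · intro y _
        exact hupd y
    have hsplit : (Finset.univ.filter fun y : α → ZMod 2 => ∑ i, u i * y i = ε).card
        + (Finset.univ.filter fun y : α → ZMod 2 => ∑ i, u i * y i = ε + 1).card
        = 2 ^ Fintype.card α := by
      have hneg : (Finset.univ.filter fun y : α → ZMod 2 => ¬ (∑ i, u i * y i = ε)) =
          (Finset.univ.filter fun y : α → ZMod 2 => ∑ i, u i * y i = ε + 1) := by
        apply Finset.filter_congr; intro y _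
        have : ∀ a b : ZMod 2, (¬ a = b) ↔ a = b + 1 := by decide
        exact this _ _
      rw [← hneg, Finset.card_filter_add_card_filter_not, Finset.card_univ,
        Fintype.card_fun]
      congr 1
    have hpos : 1 ≤ Fintype.card α := Fintype.card_pos_iff.mpr ⟨i₀⟩
    have h2 : 2 ^ Fintype.card α = 2 ^ (Fintype.card α - 1) * 2 := by
      calc 2 ^ Fintype.card α = 2 ^ (Fintype.card α - 1 + 1) := by
            rw [Nat.sub_add_cancel hpos]
        _ = 2 ^ (Fintype.card α - 1) * 2 := pow_succ 2 _
    have hk := key ε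
    rw [hk] at hsplit
    rw [hk]
    have h3 : (Finset.univ.filter fun y : α → ZMod 2 => ∑ i, u i * y i = ε + 1).card * 2
        = 2 ^ (Fintype.card α - 1) * 2 := by
      rw [← h2, ← hsplit]; ring
    exact Nat.eq_of_mul_eq_mul_right (by norm_num) h3

lemma count_supp {n : ℕ} (u : Fin n → ZMod 2) (S : Finset (Fin n)) (ε : ZMod 2) :
    (Finset.univ.filter fun x : Fin n → ZMod 2 =>
        (∀ i, i ∉ S → x i = 0) ∧ ip u x = ε).card =
      if ∀ i ∈ S, u i = 0 then (if ε = 0 then 2 ^ S.card else 0) else 2 ^ (S.card - 1) := by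
  classical
  have hsum : ∀ x : Fin n → ZMod 2, (∀ i, i ∉ S → x i = 0) →
      ip u x = ∑ i : {i // i ∈ S}, u i.1 * x i.1 := by
    intro x hx
    have h1 : ∑ i ∈ S, u i * x i = ∑ i ∈ Finset.univ, u i * x i :=
      Finset.sum_subset (Finset.subset_univ S) (by
        intro i _ hi
        rw [hx i hi, mul_zero])
    have h2 : ∑ i : {i // i ∈ S}, u i.1 * x i.1 = ∑ i ∈ S, u i * x i := by
      rw [Finset.univ_eq_attach]
      exact Finset.sum_attach S (fun i => u i * x i)
    rw [h2, h1]; rfl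
  have hcard : (Finset.univ.filter fun x : Fin n → ZMod 2 =>
      (∀ i, i ∉ S → x i = 0) ∧ ip u x = ε).card =
      (Finset.univ.filter fun y : {i // i ∈ S} → ZMod 2 =>
        ∑ i, (fun i : {i // i ∈ S} => u i.1) i * y i = ε).card := by
    refine Finset.card_nbij' (fun x => fun i => x i.1)
      (fun y => fun i => if h : i ∈ S then y ⟨i, h⟩ else 0) ?_ ?_ ?_ ?_
    · intro x hx
      simp only [Finset.mem_coe, Finset.mem_filter, Finset.mem_univ, true_and] at hx ⊢
      rw [← hsum x hx.1]
      exact hx.2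
    · intro y hy
      simp only [Finset.mem_coe, Finset.mem_filter, Finset.mem_univ, true_and] at hy ⊢
      constructor
      · intro i hi
        rw [dif_neg hi]
      · rw [hsum _ (fun i hi => dif_neg hi)]
        rw [← hy]
        apply Finset.sum_congr rfl
        intro i _
        rw [dif_pos i.2]
    · intro x hx
      simp only [Finset.mem_coe, Finset.mem_filter, Finset.mem_univ, true_and] at hx
      funext i
      dsimp only
      by_cases hi : i ∈ S
      · rw [dif_pos hi]
      · rw [dif_neg hi, hx.1 i hi]
    · intro y _
      funext i
      dsimp only
      rw [dif_pos i.2]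
  rw [hcard, count_lin]
  have hc : Fintype.card {i // i ∈ S} = S.card := Fintype.card_coe S
  have hiff : (∀ i : {i // i ∈ S}, u i.1 = 0) ↔ (∀ i ∈ S, u i = 0) :=
    ⟨fun h i hi => h ⟨i, hi⟩, fun h i => h i.1 i.2⟩
  rw [hc]
  by_cases h : ∀ i ∈ S, u i = 0
  · rw [if_pos h, if_pos (hiff.mpr h)]
  · rw [if_neg h, if_neg (fun hh => h (hiff.mp hh))]

lemma sum_split_low {n m : ℕ} (u x y : Fin n → ZMod 2)
    (hxy : ∀ i : Fin n, ¬ (i : ℕ) < m → x i = y i)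
    (hx1 : ∀ i : Fin n, (i : ℕ) < m → x i = 1)
    (hy0 : ∀ i : Fin n, (i : ℕ) < m → y i = 0) :
    ip u x = ip u y + ∑ i ∈ lowSet n m, u i := by
  unfold ip
  rw [← Finset.sum_filter_add_sum_filter_not Finset.univ (fun i : Fin n => (i : ℕ) < m)
    (fun i => u i * x i),
    ← Finset.sum_filter_add_sum_filter_not Finset.univ (fun i : Fin n => (i : ℕ) < m)
    (fun i => u i * y i)]
  have h1 : ∑ i ∈ Finset.univ.filter (fun i : Fin n => (i : ℕ) < m), u i * x i
      = ∑ i ∈ lowSet n m, u i := by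
    apply Finset.sum_congr rfl
    intro i hi
    rw [hx1 i (by simpa using (Finset.mem_filter.mp hi).2), mul_one]
  have h2 : ∑ i ∈ Finset.univ.filter (fun i : Fin n => (i : ℕ) < m), u i * y i = 0 := by
    apply Finset.sum_eq_zero
    intro i hi
    rw [hy0 i (by simpa using (Finset.mem_filter.mp hi).2), mul_zero]
  have h3 : ∑ i ∈ Finset.univ.filter (fun i : Fin n => ¬ (i : ℕ) < m), u i * x i
      = ∑ i ∈ Finset.univ.filter (fun i : Fin n => ¬ (i : ℕ) < m), u i * y i := by
    apply Finset.sum_congr rfl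
    intro i hi
    rw [hxy i (by simpa using (Finset.mem_filter.mp hi).2)]
  rw [h1, h2, h3, zero_add]
  ring

lemma count_C {n : ℕ} (m : ℕ) (u : Fin n → ZMod 2) (B : Finset (Fin n))
    (hB : ∀ j ∈ B, m ≤ (j : ℕ)) (ε : ZMod 2) :
    (Finset.univ.filter fun x : Fin n → ZMod 2 =>
        (lowSet n m ⊆ supp x ∧ supp x ⊆ lowSet n m ∪ B) ∧ ip u x = ε).card =
    if ∀ j ∈ B, u j = 0 then (if ε + ∑ i ∈ lowSet n m, u i = 0 then 2 ^ B.card else 0)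
      else 2 ^ (B.card - 1) := by
  classical
  have hmemlow : ∀ i : Fin n, i ∈ lowSet n m ↔ (i : ℕ) < m := by
    intro i; simp [lowSet]
  have hmemsupp : ∀ (x : Fin n → ZMod 2) (i : Fin n), i ∈ supp x ↔ x i ≠ 0 := by
    intro x i; simp [supp]
  have hz2 : ∀ a b c : ZMod 2, a = b + c → b = a + c := by decide
  have hcard : (Finset.univ.filter fun x : Fin n → ZMod 2 =>
      (lowSet n m ⊆ supp x ∧ supp x ⊆ lowSet n m ∪ B) ∧ ip u x = ε).card =
      (Finset.univ.filter fun y : Fin n → ZMod 2 =>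
        (∀ i, i ∉ B → y i = 0) ∧ ip u y = ε + ∑ i ∈ lowSet n m, u i).card := by
    refine Finset.card_nbij' (fun x => fun i => if (i : ℕ) < m then 0 else x i)
      (fun y => fun i => if (i : ℕ) < m then 1 else y i) ?_ ?_ ?_ ?_
    · intro x hx
      simp only [Finset.mem_coe, Finset.mem_filter, Finset.mem_univ, true_and] at hx
      obtain ⟨⟨hL, hU⟩, hip⟩ := hx
      have hx1 : ∀ i : Fin n, (i : ℕ) < m → x i = 1 := by
        intro i hi
        exact zmod2_cases _ ((hmemsupp x i).mp (hL ((hmemlow i).mpr hi)))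
      have hsum := sum_split_low u x (fun i => if (i : ℕ) < m then 0 else x i)
        (fun i hi => by simp only [if_neg hi]) hx1
        (fun i hi => by simp only [if_pos hi])
      simp only [Finset.mem_coe, Finset.mem_filter, Finset.mem_univ, true_and]
      constructor
      · intro i hi
        by_cases him : (i : ℕ) < m
        · rw [if_pos him]
        · rw [if_neg him]
          by_contra hne
          have : i ∈ lowSet n m ∪ B := hU ((hmemsupp x i).mpr hne)
          rcases Finset.mem_union.mp this with h | h
          · exact him ((hmemlow i).mp h)
          · exact hi h
      · rw [hip] at hsum
        exact hz2 _ _ _ hsum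
    · intro y hy
      simp only [Finset.mem_coe, Finset.mem_filter, Finset.mem_univ, true_and] at hy
      obtain ⟨h0, hip⟩ := hy
      have hy0 : ∀ i : Fin n, (i : ℕ) < m → y i = 0 := by
        intro i hi
        exact h0 i (fun hmem => absurd (hB i hmem) (by omega))
      have hsum := sum_split_low u (fun i => if (i : ℕ) < m then 1 else y i) y
        (fun i hi => by simp only [if_neg hi])
        (fun i hi => by simp only [if_pos hi]) hy0
      simp only [Finset.mem_coe, Finset.mem_filter, Finset.mem_univ, true_and]
      refine ⟨⟨?_, ?_⟩, ?_⟩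
      · intro i hi
        rw [hmemsupp]
        simp only [if_pos ((hmemlow i).mp hi)]
        exact one_ne_zero
      · intro i hi
        rw [hmemsupp] at hi
        by_cases him : (i : ℕ) < m
        · exact Finset.mem_union_left _ ((hmemlow i).mpr him)
        · rw [if_neg him] at hi
          refine Finset.mem_union_right _ ?_
          by_contra hc
          exact hi (h0 i hc)
      · rw [hsum, hip]
        have : ∀ a c : ZMod 2, a + c + c = a := by decide
        exact this ε _
    · intro x hx
      simp only [Finset.mem_coe, Finset.mem_filter, Finset.mem_univ, true_and] at hx
      obtain ⟨⟨hL, _⟩, _⟩ := hx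
      funext i
      dsimp only
      by_cases him : (i : ℕ) < m
      · simp only [if_pos him]
        exact (zmod2_cases _ ((hmemsupp x i).mp (hL ((hmemlow i).mpr him)))).symm
      · simp only [if_neg him]
    · intro y hy
      simp only [Finset.mem_coe, Finset.mem_filter, Finset.mem_univ, true_and] at hy
      funext i
      dsimp only
      by_cases him : (i : ℕ) < m
      · simp only [if_pos him]
        exact (hy.1 i (fun hmem => absurd (hB i hmem) (by omega))).symm
      · simp only [if_neg him]
  rw [hcard, count_supp]

lemma incl_excl {n : ℕ} (P Q R₁ R₂ T : (Fin n → ZMod 2) → Prop)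
    [DecidablePred P] [DecidablePred Q] [DecidablePred R₁] [DecidablePred R₂] [DecidablePred T]
    (h1 : ∀ x, P x → R₁ x) (h2 : ∀ x, P x → R₂ x) :
    (Finset.univ.filter fun x => (P x ∨ (Q x ∧ R₁ x) ∨ (Q x ∧ R₂ x)) ∧ T x).card
      + (Finset.univ.filter fun x => (Q x ∧ (R₁ x ∧ R₂ x)) ∧ T x).card
      + (Finset.univ.filter fun x => (P x ∧ Q x) ∧ T x).card
    = (Finset.univ.filter fun x => P x ∧ T x).card
      + (Finset.univ.filter fun x => (Q x ∧ R₁ x) ∧ T x).card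
      + (Finset.univ.filter fun x => (Q x ∧ R₂ x) ∧ T x).card := by
  classical
  simp only [Finset.card_filter]
  rw [← Finset.sum_add_distrib, ← Finset.sum_add_distrib, ← Finset.sum_add_distrib,
    ← Finset.sum_add_distrib]
  apply Finset.sum_congr rfl
  intro x _
  by_cases hp : P x
  · have hr1 := h1 x hp
    have hr2 := h2 x hp
    by_cases hq : Q x <;> by_cases ht : T x <;> simp [hp, hq, ht, hr1, hr2]
  · by_cases hq : Q x <;> by_cases hr1 : R₁ x <;> by_cases hr2 : R₂ x <;> by_cases ht : T x <;>
      simp [hp, hq, hr1, hr2, ht]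


/-- **Theorem 5.3(2).**  For `1 ≤ m < n`, nonempty incomparable
`B₁, B₂ ⊆ [n] ∖ [m]`, and `D = {x : supp(x) is not a down-closed subset of
ℍ(m,n) contained in [m]∪B₁ or in [m]∪B₂}`:
`|D| = 2ⁿ − 2^m − 2^{|B₁|} − 2^{|B₂|} + 2^{|B₁∩B₂|} + 1`, and for nonzero
`u = (v,w)` one has
`2·wt(c_{D,u}) = |D| + 2^m·χ₀ + (−1)^{wt(v)}·(2^{|B₁|}χ₁ + 2^{|B₂|}χ₂ − 2^{|B₁∩B₂|}χ₁₂ − 1)`. -/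
theorem stmt_7 (n m : ℕ) (hm : 1 ≤ m) (hmn : m < n)
    (B₁ B₂ : Finset (Fin n))
    (hB₁ne : B₁.Nonempty) (hB₂ne : B₂.Nonempty)
    (hB₁ : ∀ j ∈ B₁, m ≤ (j : ℕ)) (hB₂ : ∀ j ∈ B₂, m ≤ (j : ℕ))
    (h12 : ¬ B₁ ⊆ B₂) (h21 : ¬ B₂ ⊆ B₁)
    (D : Finset (Fin n → ZMod 2))
    (hD : D = Finset.univ.filter (fun x =>
      ¬ (HDownClosed n m (supp x) ∧
          (supp x ⊆ lowSet n m ∪ B₁ ∨ supp x ⊆ lowSet n m ∪ B₂)))) :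
    (D.card : ℤ) = 2 ^ n - 2 ^ m - 2 ^ B₁.card - 2 ^ B₂.card + 2 ^ (B₁ ∩ B₂).card + 1
    ∧ ∀ u : Fin n → ZMod 2, u ≠ 0 →
        2 * (wtD D u : ℤ) =
          (D.card : ℤ)
          + 2 ^ m * (if ∀ i : Fin n, (i : ℕ) < m → u i = 0 then 1 else 0)
          + (-1) ^ (wtLow n m u) *
              (2 ^ B₁.card * (if ∀ j ∈ B₁, u j = 0 then 1 else 0)
               + 2 ^ B₂.card * (if ∀ j ∈ B₂, u j = 0 then 1 else 0)
               - 2 ^ (B₁ ∩ B₂).card * (if ∀ j ∈ B₁ ∩ B₂, u j = 0 then 1 else 0)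
               - 1) := by
  classical
  have hmemlow : ∀ i : Fin n, i ∈ lowSet n m ↔ (i : ℕ) < m := by
    intro i; simp [lowSet]
  have hmemsupp : ∀ (x : Fin n → ZMod 2) (i : Fin n), i ∈ supp x ↔ x i ≠ 0 := by
    intro x i; simp [supp]
  have hLcard : (lowSet n m).card = m := by
    have h : (lowSet n m).card = (Finset.univ : Finset (Fin m)).card := by
      refine Finset.card_bij' (fun a ha => (⟨a.1, (hmemlow a).mp ha⟩ : Fin m))
        (fun b _ => (⟨b.1, Nat.lt_trans b.isLt hmn⟩ : Fin n)) ?_ ?_ ?_ ?_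
      · intro a ha; exact Finset.mem_univ _
      · intro b _
        exact (hmemlow _).mpr b.isLt
      · intro a ha; exact Fin.ext rfl
      · intro b _; exact Fin.ext rfl
    rw [h, Finset.card_univ, Fintype.card_fin]
  -- down-closed characterization
  have hdciff : ∀ S : Finset (Fin n), HDownClosed n m S ↔ (S ⊆ lowSet n m ∨ lowSet n m ⊆ S) := by
    intro S
    constructor
    · intro h
      by_cases hS : S ⊆ lowSet n m
      · exact Or.inl hS
      · right
        obtain ⟨j, hjS, hjL⟩ := Finset.not_subset.mp hS
        intro i hi
        have him : (i : ℕ) < m := (hmemlow i).mp hi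
        have hjm : m ≤ (j : ℕ) := le_of_not_gt (fun hc => hjL ((hmemlow j).mpr hc))
        exact h i j (Or.inr ⟨him, hjm⟩) hjS
    · rintro (h | h) i j hij hjS
      · rcases hij with rfl | ⟨him, hjm⟩
        · exact hjS
        · exact absurd ((hmemlow j).mp (h hjS)) (by omega)
      · rcases hij with rfl | ⟨him, hjm⟩
        · exact hjS
        · exact h ((hmemlow i).mpr him)
  have hdc : ∀ x : Fin n → ZMod 2,
      (HDownClosed n m (supp x) ∧ (supp x ⊆ lowSet n m ∪ B₁ ∨ supp x ⊆ lowSet n m ∪ B₂)) ↔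
      ((supp x ⊆ lowSet n m) ∨
        ((lowSet n m ⊆ supp x) ∧ supp x ⊆ lowSet n m ∪ B₁) ∨
        ((lowSet n m ⊆ supp x) ∧ supp x ⊆ lowSet n m ∪ B₂)) := by
    intro x
    rw [hdciff]
    have e1 : supp x ⊆ lowSet n m → supp x ⊆ lowSet n m ∪ B₁ :=
      fun h => h.trans Finset.subset_union_left
    tauto
  have hPiff : ∀ x : Fin n → ZMod 2,
      (supp x ⊆ lowSet n m) ↔ (∀ i, i ∉ lowSet n m → x i = 0) := by
    intro x
    constructor
    · intro h i hi
      by_contra hne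
      exact hi (h ((hmemsupp x i).mpr hne))
    · intro h i hi
      by_contra hic
      exact (hmemsupp x i).mp hi (h i hic)
  have hB12 : ∀ j ∈ B₁ ∩ B₂, m ≤ (j : ℕ) := fun j hj => hB₁ j (Finset.mem_of_mem_inter_left hj)
  have hBempty : ∀ j ∈ (∅ : Finset (Fin n)), m ≤ (j : ℕ) := fun j hj => absurd hj (by simp)
  -- master counting identity
  have master : ∀ (u : Fin n → ZMod 2) (ε : ZMod 2),
      (Finset.univ.filter fun x : Fin n → ZMod 2 =>
        (HDownClosed n m (supp x) ∧
          (supp x ⊆ lowSet n m ∪ B₁ ∨ supp x ⊆ lowSet n m ∪ B₂)) ∧ ip u x = ε).card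
      + (if ∀ j ∈ B₁ ∩ B₂, u j = 0 then
          (if ε + ∑ i ∈ lowSet n m, u i = 0 then 2 ^ (B₁ ∩ B₂).card else 0)
          else 2 ^ ((B₁ ∩ B₂).card - 1))
      + (if ε + ∑ i ∈ lowSet n m, u i = 0 then 1 else 0)
      = (if ∀ i ∈ lowSet n m, u i = 0 then (if ε = 0 then 2 ^ m else 0) else 2 ^ (m - 1))
      + (if ∀ j ∈ B₁, u j = 0 then
          (if ε + ∑ i ∈ lowSet n m, u i = 0 then 2 ^ B₁.card else 0) else 2 ^ (B₁.card - 1))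
      + (if ∀ j ∈ B₂, u j = 0 then
          (if ε + ∑ i ∈ lowSet n m, u i = 0 then 2 ^ B₂.card else 0) else 2 ^ (B₂.card - 1)) := by
    intro u ε
    have hie := incl_excl (fun x : Fin n → ZMod 2 => supp x ⊆ lowSet n m)
      (fun x => lowSet n m ⊆ supp x)
      (fun x => supp x ⊆ lowSet n m ∪ B₁) (fun x => supp x ⊆ lowSet n m ∪ B₂)
      (fun x => ip u x = ε)
      (fun x h => h.trans Finset.subset_union_left)
      (fun x h => h.trans Finset.subset_union_left)
    -- convert each filter
    have cE : (Finset.univ.filter fun x : Fin n → ZMod 2 =>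
        (HDownClosed n m (supp x) ∧
          (supp x ⊆ lowSet n m ∪ B₁ ∨ supp x ⊆ lowSet n m ∪ B₂)) ∧ ip u x = ε)
        = (Finset.univ.filter fun x : Fin n → ZMod 2 =>
          ((supp x ⊆ lowSet n m) ∨ ((lowSet n m ⊆ supp x) ∧ supp x ⊆ lowSet n m ∪ B₁) ∨
            ((lowSet n m ⊆ supp x) ∧ supp x ⊆ lowSet n m ∪ B₂)) ∧ ip u x = ε) := by
      apply Finset.filter_congr
      intro x _
      exact and_congr_left (fun _ => hdc x)
    have cA : (Finset.univ.filter fun x : Fin n → ZMod 2 =>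
        (supp x ⊆ lowSet n m) ∧ ip u x = ε).card
        = (if ∀ i ∈ lowSet n m, u i = 0 then (if ε = 0 then 2 ^ m else 0) else 2 ^ (m - 1)) := by
      rw [Finset.filter_congr (fun x _ => and_congr_left (fun _ => hPiff x)), count_supp, hLcard]
    have c12 : (Finset.univ.filter fun x : Fin n → ZMod 2 =>
        ((lowSet n m ⊆ supp x) ∧ (supp x ⊆ lowSet n m ∪ B₁ ∧ supp x ⊆ lowSet n m ∪ B₂))
          ∧ ip u x = ε).card
        = (if ∀ j ∈ B₁ ∩ B₂, u j = 0 then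
            (if ε + ∑ i ∈ lowSet n m, u i = 0 then 2 ^ (B₁ ∩ B₂).card else 0)
            else 2 ^ ((B₁ ∩ B₂).card - 1)) := by
      rw [← count_C m u (B₁ ∩ B₂) hB12 ε]
      apply congrArg
      apply Finset.filter_congr
      intro x _
      apply and_congr_left
      intro _
      apply and_congr_right
      intro _
      rw [Finset.union_inter_distrib_left, Finset.subset_inter_iff]
    have cPt : (Finset.univ.filter fun x : Fin n → ZMod 2 =>
        ((supp x ⊆ lowSet n m) ∧ (lowSet n m ⊆ supp x)) ∧ ip u x = ε).card
        = (if ε + ∑ i ∈ lowSet n m, u i = 0 then 1 else 0) := by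
      have h0 : (Finset.univ.filter fun x : Fin n → ZMod 2 =>
          ((supp x ⊆ lowSet n m) ∧ (lowSet n m ⊆ supp x)) ∧ ip u x = ε).card
          = (Finset.univ.filter fun x : Fin n → ZMod 2 =>
            ((lowSet n m ⊆ supp x) ∧ supp x ⊆ lowSet n m ∪ (∅ : Finset (Fin n)))
              ∧ ip u x = ε).card := by
        apply congrArg
        apply Finset.filter_congr
        intro x _
        apply and_congr_left
        intro _
        rw [Finset.union_empty]
        exact and_comm
      rw [h0, count_C m u ∅ hBempty ε]
      simp
    rw [cA, c12, cPt, count_C m u B₁ hB₁ ε, count_C m u B₂ hB₂ ε] at hie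
    rw [cE]
    exact hie
  -- some generic doubling facts
  have hpow2 : ∀ k : ℕ, 1 ≤ k → (2:ℤ) * 2 ^ (k - 1) = 2 ^ k := by
    intro k hk
    calc (2:ℤ) * 2 ^ (k - 1) = 2 ^ (k - 1 + 1) := (pow_succ' 2 _).symm
      _ = 2 ^ k := by congr 1; omega
  -- Part 1 : cardinality of D
  have hucard : (Finset.univ : Finset (Fin n → ZMod 2)).card = 2 ^ n := by
    rw [Finset.card_univ, Fintype.card_fun, Fintype.card_fin]
    norm_num
  have hsplit : (Finset.univ.filter fun x : Fin n → ZMod 2 =>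
      (HDownClosed n m (supp x) ∧
        (supp x ⊆ lowSet n m ∪ B₁ ∨ supp x ⊆ lowSet n m ∪ B₂))).card + D.card = 2 ^ n := by
    rw [hD, ← hucard]
    exact Finset.card_filter_add_card_filter_not
      (p := fun x : Fin n → ZMod 2 => (HDownClosed n m (supp x) ∧
        (supp x ⊆ lowSet n m ∪ B₁ ∨ supp x ⊆ lowSet n m ∪ B₂)))
  have hE0 := master 0 0
  have hip0 : ∀ x : Fin n → ZMod 2, ip (0 : Fin n → ZMod 2) x = 0 := by
    intro x; simp [ip]
  have hdrop : (Finset.univ.filter fun x : Fin n → ZMod 2 =>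
      (HDownClosed n m (supp x) ∧
        (supp x ⊆ lowSet n m ∪ B₁ ∨ supp x ⊆ lowSet n m ∪ B₂)) ∧ ip (0 : Fin n → ZMod 2) x = (0 : ZMod 2))
      = (Finset.univ.filter fun x : Fin n → ZMod 2 =>
      (HDownClosed n m (supp x) ∧
        (supp x ⊆ lowSet n m ∪ B₁ ∨ supp x ⊆ lowSet n m ∪ B₂))) := by
    apply Finset.filter_congr
    intro x _
    exact and_iff_left (hip0 x)
  rw [hdrop] at hE0
  simp only [Pi.zero_apply, Finset.sum_const_zero, add_zero, if_pos rfl,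
    implies_true, if_true] at hE0
  have hDcard : (D.card : ℤ) =
      2 ^ n - 2 ^ m - 2 ^ B₁.card - 2 ^ B₂.card + 2 ^ (B₁ ∩ B₂).card + 1 := by
    have h1 : ((Finset.univ.filter fun x : Fin n → ZMod 2 =>
        (HDownClosed n m (supp x) ∧
          (supp x ⊆ lowSet n m ∪ B₁ ∨ supp x ⊆ lowSet n m ∪ B₂))).card : ℤ) + D.card
        = 2 ^ n := by exact_mod_cast congrArg (Nat.cast : ℕ → ℤ) hsplit
    have h2 : ((Finset.univ.filter fun x : Fin n → ZMod 2 =>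
        (HDownClosed n m (supp x) ∧
          (supp x ⊆ lowSet n m ∪ B₁ ∨ supp x ⊆ lowSet n m ∪ B₂))).card : ℤ)
        + 2 ^ (B₁ ∩ B₂).card + 1 = 2 ^ m + 2 ^ B₁.card + 2 ^ B₂.card := by
      exact_mod_cast congrArg (Nat.cast : ℕ → ℤ) hE0
    linarith
  refine ⟨hDcard, ?_⟩
  -- Part 2
  intro u hu
  have hchi0 : (∀ i : Fin n, (i : ℕ) < m → u i = 0) ↔ (∀ i ∈ lowSet n m, u i = 0) :=
    ⟨fun h i hi => h i ((hmemlow i).mp hi), fun h i hi => h i ((hmemlow i).mpr hi)⟩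
  -- weight plumbing
  have hfull : (Finset.univ.filter fun x : Fin n → ZMod 2 => ip u x = 1).card = 2 ^ (n - 1) := by
    have h := count_supp u (Finset.univ : Finset (Fin n)) 1
    have hcongr : (Finset.univ.filter fun x : Fin n → ZMod 2 =>
        (∀ i, i ∉ (Finset.univ : Finset (Fin n)) → x i = 0) ∧ ip u x = 1)
        = Finset.univ.filter (fun x : Fin n → ZMod 2 => ip u x = 1) := by
      apply Finset.filter_congr
      intro x _
      exact and_iff_right (fun i hi => absurd (Finset.mem_univ i) hi)
    rw [hcongr] at h
    rw [h, if_neg ?_, Finset.card_univ, Fintype.card_fin]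
    intro hc
    apply hu
    funext i
    exact hc i (Finset.mem_univ i)
  have hsum3 : (Finset.univ.filter fun x : Fin n → ZMod 2 =>
      (HDownClosed n m (supp x) ∧
        (supp x ⊆ lowSet n m ∪ B₁ ∨ supp x ⊆ lowSet n m ∪ B₂)) ∧ ip u x = 1).card
      + (Finset.univ.filter fun x : Fin n → ZMod 2 =>
      (¬ (HDownClosed n m (supp x) ∧
        (supp x ⊆ lowSet n m ∪ B₁ ∨ supp x ⊆ lowSet n m ∪ B₂))) ∧ ip u x = 1).card
      = (Finset.univ.filter fun x : Fin n → ZMod 2 => ip u x = 1).card := by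
    simp only [Finset.card_filter]
    rw [← Finset.sum_add_distrib]
    apply Finset.sum_congr rfl
    intro x _
    by_cases hp : (HDownClosed n m (supp x) ∧
        (supp x ⊆ lowSet n m ∪ B₁ ∨ supp x ⊆ lowSet n m ∪ B₂)) <;>
      by_cases hq : ip u x = 1 <;> simp [hp, hq]
  have hwtD : wtD D u = (Finset.univ.filter fun x : Fin n → ZMod 2 =>
      (¬ (HDownClosed n m (supp x) ∧
        (supp x ⊆ lowSet n m ∪ B₁ ∨ supp x ⊆ lowSet n m ∪ B₂))) ∧ ip u x = 1).card := by
    unfold wtD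
    rw [hD, Finset.filter_filter]
  -- the sum over the low set is the parity of wtLow
  have hsl : (∑ i ∈ lowSet n m, u i) = ((wtLow n m u : ℕ) : ZMod 2) := by
    have h1 : ∑ i ∈ lowSet n m, u i
        = ∑ i ∈ lowSet n m, (if u i ≠ 0 then (1 : ZMod 2) else 0) := by
      apply Finset.sum_congr rfl
      intro i _
      by_cases h : u i = 0
      · simp [h]
      · simp [h, zmod2_cases _ h]
    rw [h1, Finset.sum_boole]
    have h2 : (lowSet n m).filter (fun i => u i ≠ 0)
        = Finset.univ.filter (fun i : Fin n => (i : ℕ) < m ∧ u i ≠ 0) := by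
      unfold lowSet
      rw [Finset.filter_filter]
    rw [h2]
    rfl
  have hm1 := master u 1
  simp only [one_ne_zero, if_false] at hm1
  have hdub : ∀ (B : Finset (Fin n)),
      (2 * (if ∀ j ∈ B, u j = 0 then (0:ℤ) else 2 ^ (B.card - 1))
        = 2 ^ B.card - 2 ^ B.card * (if ∀ j ∈ B, u j = 0 then (1:ℤ) else 0)) ∧
      (2 * (if ∀ j ∈ B, u j = 0 then (2 ^ B.card : ℤ) else 2 ^ (B.card - 1))
        = 2 ^ B.card + 2 ^ B.card * (if ∀ j ∈ B, u j = 0 then (1:ℤ) else 0)) := by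
    intro B
    by_cases hc : ∀ j ∈ B, u j = 0
    · simp only [if_pos hc]
      constructor <;> ring
    · have h1 : 1 ≤ B.card := by
        push_neg at hc
        obtain ⟨j, hj, _⟩ := hc
        exact Finset.card_pos.mpr ⟨j, hj⟩
      simp only [if_neg hc, mul_zero, sub_zero, add_zero]
      exact ⟨hpow2 _ h1, hpow2 _ h1⟩
  have hdubA : 2 * (if ∀ i ∈ lowSet n m, u i = 0 then (0:ℤ) else 2 ^ (m - 1))
      = 2 ^ m - 2 ^ m * (if ∀ i : Fin n, (i : ℕ) < m → u i = 0 then (1:ℤ) else 0) := by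
    by_cases hc : ∀ i ∈ lowSet n m, u i = 0
    · simp only [if_pos hc, if_pos (hchi0.mpr hc)]
      ring
    · simp only [if_neg hc, if_neg (fun hcc => hc (hchi0.mp hcc)), mul_zero, sub_zero]
      exact hpow2 m hm
  have hd1 := hdub B₁
  have hd2 := hdub B₂
  have hd12 := hdub (B₁ ∩ B₂)
  have hwtn : wtD D u + (Finset.univ.filter fun x : Fin n → ZMod 2 =>
      (HDownClosed n m (supp x) ∧
        (supp x ⊆ lowSet n m ∪ B₁ ∨ supp x ⊆ lowSet n m ∪ B₂)) ∧ ip u x = 1).card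
      = 2 ^ (n - 1) := by
    rw [hwtD]
    rw [← hfull, Nat.add_comm]
    exact hsum3
  have hwtz : (wtD D u : ℤ) + ((Finset.univ.filter fun x : Fin n → ZMod 2 =>
      (HDownClosed n m (supp x) ∧
        (supp x ⊆ lowSet n m ∪ B₁ ∨ supp x ⊆ lowSet n m ∪ B₂)) ∧ ip u x = 1).card : ℤ)
      = 2 ^ (n - 1) := by exact_mod_cast congrArg (Nat.cast : ℕ → ℤ) hwtn
  have hpn : (2:ℤ) * 2 ^ (n - 1) = 2 ^ n := hpow2 n (by omega)
  rcases Nat.even_or_odd (wtLow n m u) with hpar | hpar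
  · -- even case
    have hs0 : ((wtLow n m u : ℕ) : ZMod 2) = 0 :=
      (ZMod.natCast_eq_zero_iff _ 2).mpr hpar.two_dvd
    have hcond : ¬((1 : ZMod 2) + ∑ i ∈ lowSet n m, u i = 0) := by
      rw [hsl, hs0, add_zero]
      exact one_ne_zero
    simp only [if_neg hcond, add_zero] at hm1
    have hsig : ((-1 : ℤ)) ^ (wtLow n m u) = 1 := Even.neg_one_pow hpar
    rw [hsig, one_mul]
    push_cast at hm1
    linarith [hd1.1, hd2.1, hd12.1, hdubA, hwtz, hDcard, hpn, hm1]
  · -- odd case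
    have hs1 : ((wtLow n m u : ℕ) : ZMod 2) = 1 := by
      have h2 : wtLow n m u % 2 = 1 := Nat.odd_iff.mp hpar
      calc ((wtLow n m u : ℕ) : ZMod 2) = ((wtLow n m u % 2 : ℕ) : ZMod 2) :=
            (ZMod.natCast_mod _ 2).symm
        _ = ((1 : ℕ) : ZMod 2) := by rw [h2]
        _ = 1 := Nat.cast_one
    have hcond : (1 : ZMod 2) + ∑ i ∈ lowSet n m, u i = 0 := by
      rw [hsl, hs1]
      decide
    simp only [if_pos hcond] at hm1
    have hsig : ((-1 : ℤ)) ^ (wtLow n m u) = -1 := Odd.neg_one_pow hpar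
    rw [hsig]
    push_cast at hm1
    linarith [hd1.2, hd2.2, hd12.2, hdubA, hwtz, hDcard, hpn, hm1]
end

section
/- Let 1 ≤ m < n and ∅ ≠ B ⊆ [n]∖[m], and let f : 𝔽₂ⁿ → 𝔽₂ be defined by f(x) = 1 if and only if supp(x) is a nonempty down-closed subset of ℍ(m,n) contained in [m] ∪ B. Then: wt(c_f(0,0)) = 0; wt(c_f(0,u)) = 2^{n−1} for all u ≠ 0; wt(c_f(1,0)) = 2^m + 2^{|B|} − 2; and for every nonzero u = (v,w) ∈ 𝔽₂ⁿ, wt(c_f(1,u)) = 2^{n−1} − 1 + 2^m·χ₀ + (−1)^{wt(v)}·(2^{|B|}·χ_B − 1), where χ₀ = 1 iff v = 0 and χ_B = 1 iff supp(w) ∩ B = ∅ (each being 0 otherwise). -/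
open Finset

lemma zmod2_ne_zero {a : ZMod 2} (h : a ≠ 0) : a = 1 := by
  revert a; decide

lemma zmod2_or (a : ZMod 2) : a = 0 ∨ a = 1 := by
  revert a; decide

lemma count_ip_ne {ι : Type} [Fintype ι] [DecidableEq ι] (u : ι → ZMod 2)
    (i₀ : ι) (hu : u i₀ = 1) (c : ZMod 2) :
    (Finset.univ.filter (fun x : ι → ZMod 2 => ∑ i, u i * x i = c)).card
      = 2 ^ (Fintype.card ι - 1) := by
  have hupd : ∀ (x : ι → ZMod 2), ∑ i, u i * Function.update x i₀ (x i₀ + 1) i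
      = (∑ i, u i * x i) + 1 := by
    intro x
    have h1 : ∀ i, u i * Function.update x i₀ (x i₀ + 1) i
        = u i * x i + (if i = i₀ then 1 else 0) := by
      intro i
      rcases eq_or_ne i i₀ with h | h
      · subst h; simp [Function.update_self, mul_add, hu]
      · simp [Function.update_of_ne h, h]
    rw [Finset.sum_congr rfl (fun i _ => h1 i), Finset.sum_add_distrib,
      Finset.sum_ite_eq' Finset.univ i₀ (fun _ => (1 : ZMod 2))]
    simp
  have hinv : ∀ (x : ι → ZMod 2),
      Function.update (Function.update x i₀ (x i₀ + 1)) i₀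
        ((Function.update x i₀ (x i₀ + 1)) i₀ + 1) = x := by
    intro x
    funext i
    rcases eq_or_ne i i₀ with h | h
    · subst h
      simp [Function.update_self]
      have : (1 : ZMod 2) + 1 = 0 := by decide
      rw [add_assoc, this, add_zero]
    · simp [Function.update_of_ne h]
  have key : ∀ c' : ZMod 2,
      (Finset.univ.filter (fun x : ι → ZMod 2 => ∑ i, u i * x i = c')).card
        = (Finset.univ.filter (fun x : ι → ZMod 2 => ∑ i, u i * x i = c' + 1)).card := by
    intro c'
    apply Finset.card_bij' (fun x _ => Function.update x i₀ (x i₀ + 1))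
      (fun x _ => Function.update x i₀ (x i₀ + 1))
    · intro x _; exact hinv x
    · intro x _; exact hinv x
    · intro x hx
      simp only [Finset.mem_filter, Finset.mem_univ, true_and] at hx ⊢
      rw [hupd, hx]
    · intro x hx
      simp only [Finset.mem_filter, Finset.mem_univ, true_and] at hx ⊢
      rw [hupd, hx, add_assoc]
      have h11 : (1 : ZMod 2) + 1 = 0 := by decide
      rw [h11, add_zero]
  have htot : (Finset.univ.filter (fun x : ι → ZMod 2 => ∑ i, u i * x i = 0)).card
      + (Finset.univ.filter (fun x : ι → ZMod 2 => ∑ i, u i * x i = 1)).card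
      = 2 ^ Fintype.card ι := by
    have h1 := Finset.card_filter_add_card_filter_not
      (s := (Finset.univ : Finset (ι → ZMod 2)))
      (p := fun x : ι → ZMod 2 => ∑ i, u i * x i = 0)
    have h2 : Finset.univ.filter (fun x : ι → ZMod 2 => ¬ (∑ i, u i * x i = 0))
        = Finset.univ.filter (fun x : ι → ZMod 2 => ∑ i, u i * x i = 1) := by
      apply Finset.filter_congr
      intro x _
      constructor
      · intro h; exact zmod2_ne_zero h
      · intro h h0; rw [h0] at h; exact one_ne_zero h.symm
    rw [h2] at h1
    rw [h1, Finset.card_univ]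
    simp [Fintype.card_fun]
  have hpos : 1 ≤ Fintype.card ι := Fintype.card_pos_iff.mpr ⟨i₀⟩
  obtain ⟨k, hk⟩ : ∃ k, Fintype.card ι = k + 1 :=
    ⟨Fintype.card ι - 1, (Nat.succ_pred_eq_of_pos hpos).symm⟩
  have h01 := key 0
  have hzero1 : (0 : ZMod 2) + 1 = 1 := by decide
  rw [hzero1] at h01
  have hc0 : (Finset.univ.filter (fun x : ι → ZMod 2 => ∑ i, u i * x i = 0)).card = 2 ^ k := by
    rw [hk, pow_succ] at htot
    rw [← h01] at htot
    linarith
  rw [hk]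
  simp only [Nat.add_sub_cancel]
  rcases zmod2_or c with h | h <;> subst h
  · exact hc0
  · rw [← h01]; exact hc0

lemma count_ip_zero {ι : Type} [Fintype ι] [DecidableEq ι] (u : ι → ZMod 2)
    (hu : ∀ i, u i = 0) (c : ZMod 2) :
    (Finset.univ.filter (fun x : ι → ZMod 2 => ∑ i, u i * x i = c)).card
      = if c = 0 then 2 ^ Fintype.card ι else 0 := by
  have hz : ∀ x : ι → ZMod 2, ∑ i, u i * x i = 0 := by
    intro x; simp [hu]
  rcases zmod2_or c with h | h <;> subst h
  · simp only [if_pos rfl]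
    rw [Finset.filter_true_of_mem (fun x _ => hz x), Finset.card_univ]
    simp [Fintype.card_fun]
  · have : (1 : ZMod 2) ≠ 0 := by decide
    simp only [if_neg this]
    rw [Finset.filter_false_of_mem, Finset.card_empty]
    intro x _
    rw [hz x]
    exact fun h => this h.symm

lemma cube_count {n : ℕ} (s : Finset (Fin n)) (b u : Fin n → ZMod 2) (c : ZMod 2) :
    (Finset.univ.filter (fun x : Fin n → ZMod 2 => (∀ i ∉ s, x i = b i) ∧ ip u x = c)).card
      = ((Finset.univ : Finset ({i // i ∈ s} → ZMod 2)).filter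
          (fun y => ∑ i : {i // i ∈ s}, u i.1 * y i = c + ∑ i ∈ sᶜ, u i * b i)).card := by
  have hd : ∀ x : Fin n → ZMod 2, (∀ i ∉ s, x i = b i) →
      ip u x = (∑ i : {i // i ∈ s}, u i.1 * x i.1) + ∑ i ∈ sᶜ, u i * b i := by
    intro x hx
    have h1 : ip u x = (∑ i ∈ s, u i * x i) + ∑ i ∈ sᶜ, u i * x i :=
      (Finset.sum_add_sum_compl s _).symm
    have h2 : ∑ i ∈ sᶜ, u i * x i = ∑ i ∈ sᶜ, u i * b i := by
      apply Finset.sum_congr rfl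
      intro i hi
      rw [hx i (Finset.mem_compl.mp hi)]
    have h3 : ∑ i ∈ s, u i * x i = ∑ i : {i // i ∈ s}, u i.1 * x i.1 :=
      (Finset.sum_coe_sort s (fun i => u i * x i)).symm
    rw [h1, h2, h3]
  have hiff : ∀ x : Fin n → ZMod 2, (∀ i ∉ s, x i = b i) →
      (ip u x = c ↔ (∑ i : {i // i ∈ s}, u i.1 * x i.1) = c + ∑ i ∈ sᶜ, u i * b i) := by
    intro x hx
    rw [hd x hx]
    set d := ∑ i ∈ sᶜ, u i * b i
    constructor
    · intro h
      have := congrArg (· + d) h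
      rwa [add_assoc, CharTwo.add_self_eq_zero, add_zero] at this
    · intro h
      rw [h, add_assoc, CharTwo.add_self_eq_zero, add_zero]
  apply Finset.card_bij' (fun x _ => fun i : {i // i ∈ s} => x i.1)
    (fun y _ => fun i => if h : i ∈ s then y ⟨i, h⟩ else b i)
  · intro x hx
    simp only [Finset.mem_filter, Finset.mem_univ, true_and] at hx ⊢
    exact (hiff x hx.1).mp hx.2
  · intro y hy
    simp only [Finset.mem_filter, Finset.mem_univ, true_and] at hy ⊢
    constructor
    · intro i hi; simp [hi]
    · rw [hiff _ (fun i hi => by simp [hi])]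
      refine Eq.trans ?_ hy
      apply Finset.sum_congr rfl
      intro i _
      rw [dif_pos i.2]
  · intro x hx
    simp only [Finset.mem_filter, Finset.mem_univ, true_and] at hx
    funext i
    by_cases h : i ∈ s
    · simp [h]
    · simp [h, hx.1 i h]
  · intro y _
    funext i
    simp [i.2]



def blowF (n m : ℕ) : Fin n → ZMod 2 := fun i => if (i : ℕ) < m then 1 else 0

lemma lowSet_card {n m : ℕ} (h : m ≤ n) : (lowSet n m).card = m := by
  have : lowSet n m = (Finset.univ : Finset (Fin m)).map
      ⟨Fin.castLE h, Fin.castLE_injective h⟩ := by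
    ext j
    simp only [lowSet, Finset.mem_filter, Finset.mem_univ, true_and, Finset.mem_map,
      Function.Embedding.coeFn_mk]
    constructor
    · intro hj
      exact ⟨⟨(j : ℕ), hj⟩, by ext; simp [Fin.castLE]⟩
    · rintro ⟨i, rfl⟩
      exact i.2
  rw [this, Finset.card_map, Finset.card_univ, Fintype.card_fin]

lemma ip_blow {n m : ℕ} (u : Fin n → ZMod 2) :
    ip u (blowF n m) = (wtLow n m u : ZMod 2) := by
  have h1 : ip u (blowF n m) = ∑ i ∈ Finset.univ.filter (fun i : Fin n => (i : ℕ) < m), u i := by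
    rw [ip, Finset.sum_filter]
    apply Finset.sum_congr rfl
    intro i _
    by_cases h : (i : ℕ) < m <;> simp [blowF, h]
  have h2 : ∑ i ∈ Finset.univ.filter (fun i : Fin n => (i : ℕ) < m), u i
      = ∑ i ∈ Finset.univ.filter (fun i : Fin n => (i : ℕ) < m),
          (if u i ≠ 0 then (1 : ZMod 2) else 0) := by
    apply Finset.sum_congr rfl
    intro i _
    rcases zmod2_or (u i) with h | h <;> simp [h]
  rw [h1, h2, Finset.sum_boole, wtLow]
  congr 1
  rw [Finset.filter_filter]

lemma S1_card {n m : ℕ} (hmn : m ≤ n) (u : Fin n → ZMod 2) (c : ZMod 2) :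
    (Finset.univ.filter
        (fun x : Fin n → ZMod 2 => (∀ i ∉ lowSet n m, x i = 0) ∧ ip u x = c)).card
      = if (∀ i : Fin n, (i : ℕ) < m → u i = 0) then (if c = 0 then 2 ^ m else 0)
        else 2 ^ (m - 1) := by
  have e1 : (Finset.univ.filter
        (fun x : Fin n → ZMod 2 => (∀ i ∉ lowSet n m, x i = 0) ∧ ip u x = c))
      = (Finset.univ.filter
        (fun x : Fin n → ZMod 2 =>
          (∀ i ∉ lowSet n m, x i = (fun _ => (0 : ZMod 2)) i) ∧ ip u x = c)) := by
    ext x; simp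
  have hd : ∑ i ∈ (lowSet n m)ᶜ, u i * (fun _ => (0 : ZMod 2)) i = 0 := by simp
  rw [e1, cube_count (lowSet n m) (fun _ => (0 : ZMod 2)) u c, hd, add_zero]
  have hcard : Fintype.card {i // i ∈ lowSet n m} = m := by
    rw [Fintype.card_coe, lowSet_card hmn]
  by_cases hv : ∀ i : Fin n, (i : ℕ) < m → u i = 0
  · rw [if_pos hv]
    have hz : ∀ i : {i // i ∈ lowSet n m}, (fun i : {i // i ∈ lowSet n m} => u i.1) i = 0 := by
      rintro ⟨i, hi⟩
      simp only [lowSet, Finset.mem_filter, Finset.mem_univ, true_and] at hi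
      exact hv i hi
    rw [count_ip_zero _ hz c, hcard]
  · rw [if_neg hv]
    push_neg at hv
    obtain ⟨i, hi, hui⟩ := hv
    have hmem : i ∈ lowSet n m := by simp [lowSet, hi]
    rw [count_ip_ne (fun i : {i // i ∈ lowSet n m} => u i.1) ⟨i, hmem⟩
      (zmod2_ne_zero hui) c, hcard]

lemma S2_card {n m : ℕ} (B : Finset (Fin n)) (hB : ∀ j ∈ B, m ≤ (j : ℕ))
    (u : Fin n → ZMod 2) (c : ZMod 2) :
    (Finset.univ.filter
        (fun x : Fin n → ZMod 2 => (∀ i ∉ B, x i = blowF n m i) ∧ ip u x = c)).card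
      = if (∀ j ∈ B, u j = 0) then (if c + ip u (blowF n m) = 0 then 2 ^ B.card else 0)
        else 2 ^ (B.card - 1) := by
  have hd2 : ∑ i ∈ Bᶜ, u i * blowF n m i = ip u (blowF n m) := by
    have h1 : (∑ i ∈ B, u i * blowF n m i) + ∑ i ∈ Bᶜ, u i * blowF n m i
        = ip u (blowF n m) := Finset.sum_add_sum_compl B _
    have h2 : ∑ i ∈ B, u i * blowF n m i = 0 := by
      apply Finset.sum_eq_zero
      intro i hi
      have : ¬ (i : ℕ) < m := not_lt.mpr (hB i hi)
      simp [blowF, this]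
    rw [h2, zero_add] at h1
    exact h1
  rw [cube_count B (blowF n m) u c, hd2]
  have hcard : Fintype.card {i // i ∈ B} = B.card := Fintype.card_coe B
  by_cases hw : ∀ j ∈ B, u j = 0
  · rw [if_pos hw]
    have hz : ∀ i : {i // i ∈ B}, (fun i : {i // i ∈ B} => u i.1) i = 0 :=
      fun ⟨i, hi⟩ => hw i hi
    rw [count_ip_zero _ hz, hcard]
  · rw [if_neg hw]
    push_neg at hw
    obtain ⟨i, hi, hui⟩ := hw
    rw [count_ip_ne (fun i : {i // i ∈ B} => u i.1) ⟨i, hi⟩ (zmod2_ne_zero hui), hcard]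



lemma mem_lowSet {n m : ℕ} (i : Fin n) : i ∈ lowSet n m ↔ (i : ℕ) < m := by
  simp [lowSet]

lemma mem_supp {n : ℕ} (x : Fin n → ZMod 2) (i : Fin n) : i ∈ supp x ↔ x i ≠ 0 := by
  simp [supp]

lemma ip_zero_right {n : ℕ} (u : Fin n → ZMod 2) : ip u 0 = 0 := by
  simp [ip]

lemma ip_zero_left {n : ℕ} (x : Fin n → ZMod 2) : ip 0 x = 0 := by
  simp [ip]

lemma blow_ne_zero {n m : ℕ} (hm : 1 ≤ m) (hn : 0 < n) : blowF n m ≠ (0 : Fin n → ZMod 2) := by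
  intro h
  have h0 : blowF n m ⟨0, hn⟩ = 0 := by rw [h]; rfl
  have : (0 : ℕ) < m := hm
  simp [blowF, this] at h0

lemma f_iff {n m : ℕ} (hm : 1 ≤ m) (hmn : m < n) (B : Finset (Fin n))
    (hB : ∀ j ∈ B, m ≤ (j : ℕ)) (f : (Fin n → ZMod 2) → ZMod 2)
    (hf : ∀ x, f x = 1 ↔
      ((supp x).Nonempty ∧ HDownClosed n m (supp x) ∧ supp x ⊆ lowSet n m ∪ B))
    (x : Fin n → ZMod 2) :
    f x = 1 ↔ ((∀ i ∉ lowSet n m, x i = 0) ∧ x ≠ 0) ∨ (∀ i ∉ B, x i = blowF n m i) := by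
  rw [hf]
  constructor
  · rintro ⟨hne0, hdc, hsub⟩
    by_cases htop : ∃ j : Fin n, m ≤ (j : ℕ) ∧ x j ≠ 0
    · right
      intro i hiB
      by_cases hi : (i : ℕ) < m
      · obtain ⟨j, hj1, hj2⟩ := htop
        have hmem : i ∈ supp x := hdc i j (Or.inr ⟨hi, hj1⟩) ((mem_supp x j).mpr hj2)
        have hx := (mem_supp x i).mp hmem
        simp only [blowF, if_pos hi]
        exact zmod2_ne_zero hx
      · have hx0 : x i = 0 := by
          by_contra hxi
          have hmem := hsub ((mem_supp x i).mpr hxi)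
          rcases Finset.mem_union.mp hmem with h | h
          · exact hi ((mem_lowSet i).mp h)
          · exact hiB h
        simp only [blowF, if_neg hi]
        exact hx0
    · left
      refine ⟨?_, ?_⟩
      · intro i hi
        by_contra hxi
        exact htop ⟨i, not_lt.mp (fun h => hi ((mem_lowSet i).mpr h)), hxi⟩
      · obtain ⟨j, hj⟩ := hne0
        intro h0
        rw [h0] at hj
        exact (mem_supp 0 j).mp hj rfl
  · rintro (⟨hcube, hx0⟩ | hcube)
    · refine ⟨?_, ?_, ?_⟩
      · obtain ⟨j, hj⟩ := Function.ne_iff.mp hx0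
        exact ⟨j, (mem_supp x j).mpr hj⟩
      · intro i j hle hjmem
        rcases hle with h | ⟨hi, hj⟩
        · rwa [h]
        · exfalso
          have hz : x j = 0 := hcube j (fun hmem => by
            have := (mem_lowSet j).mp hmem
            omega)
          exact (mem_supp x j).mp hjmem hz
      · intro i hi
        apply Finset.mem_union_left
        rw [mem_lowSet]
        by_contra hil
        exact (mem_supp x i).mp hi (hcube i (fun hmem => hil ((mem_lowSet i).mp hmem)))
    · have hlow1 : ∀ i : Fin n, (i : ℕ) < m → x i = 1 := by
        intro i hi
        have hiB : i ∉ B := fun h => by have := hB i h; omega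
        rw [hcube i hiB]
        simp [blowF, hi]
      refine ⟨?_, ?_, ?_⟩
      · have hn : 0 < n := lt_of_le_of_lt (Nat.zero_le m) hmn
        refine ⟨⟨0, hn⟩, (mem_supp x _).mpr ?_⟩
        rw [hlow1 ⟨0, hn⟩ hm]
        exact one_ne_zero
      · intro i j hle hj
        rcases hle with h | ⟨hi, _⟩
        · rwa [h]
        · refine (mem_supp x i).mpr ?_
          rw [hlow1 i hi]
          exact one_ne_zero
      · intro i hi
        by_cases hiB : i ∈ B
        · exact Finset.mem_union_right _ hiB
        · apply Finset.mem_union_left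
          rw [mem_lowSet]
          by_contra him
          have hz : x i = 0 := by
            rw [hcube i hiB]
            simp [blowF, him]
          exact (mem_supp x i).mp hi hz



lemma star_count {n m : ℕ} (hm : 1 ≤ m) (hmn : m < n) (B : Finset (Fin n))
    (hB : ∀ j ∈ B, m ≤ (j : ℕ)) (f : (Fin n → ZMod 2) → ZMod 2)
    (hf : ∀ x, f x = 1 ↔
      ((supp x).Nonempty ∧ HDownClosed n m (supp x) ∧ supp x ⊆ lowSet n m ∪ B))
    (u : Fin n → ZMod 2) (c : ZMod 2) :
    (Finset.univ.filter (fun x : Fin n → ZMod 2 => f x = 1 ∧ ip u x = c)).card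
      + (if ip u (blowF n m) = c then 1 else 0) + (if c = 0 then 1 else 0)
      = (Finset.univ.filter
          (fun x : Fin n → ZMod 2 => (∀ i ∉ lowSet n m, x i = 0) ∧ ip u x = c)).card
      + (Finset.univ.filter
          (fun x : Fin n → ZMod 2 => (∀ i ∉ B, x i = blowF n m i) ∧ ip u x = c)).card := by
  set S1 := Finset.univ.filter
    (fun x : Fin n → ZMod 2 => (∀ i ∉ lowSet n m, x i = 0) ∧ ip u x = c) with hS1
  set S2 := Finset.univ.filter
    (fun x : Fin n → ZMod 2 => (∀ i ∉ B, x i = blowF n m i) ∧ ip u x = c) with hS2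
  have hn : 0 < n := lt_of_le_of_lt (Nat.zero_le m) hmn
  -- the union decomposition
  have hF : Finset.univ.filter (fun x : Fin n → ZMod 2 => f x = 1 ∧ ip u x = c)
      = (S1.erase 0) ∪ S2 := by
    ext x
    simp only [Finset.mem_filter, Finset.mem_univ, true_and, Finset.mem_union,
      Finset.mem_erase, hS1, hS2, f_iff hm hmn B hB f hf x]
    tauto
  -- the intersection
  have hI : (S1.erase 0) ∩ S2
      = if ip u (blowF n m) = c then {blowF n m} else ∅ := by
    ext x
    simp only [Finset.mem_inter, Finset.mem_erase, Finset.mem_filter, Finset.mem_univ,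
      true_and, hS1, hS2]
    constructor
    · rintro ⟨⟨hx0, hcube1, hip⟩, hcube2, -⟩
      have hxb : x = blowF n m := by
        funext i
        by_cases hi : (i : ℕ) < m
        · have hiB : i ∉ B := fun h => by have := hB i h; omega
          exact hcube2 i hiB
        · rw [hcube1 i (fun hmem => hi ((mem_lowSet i).mp hmem))]
          simp [blowF, hi]
      subst hxb
      rw [if_pos hip]
      exact Finset.mem_singleton_self _
    · intro hx
      by_cases hd : ip u (blowF n m) = c
      · rw [if_pos hd, Finset.mem_singleton] at hx
        subst hx
        refine ⟨⟨blow_ne_zero hm hn, ?_, hd⟩, ?_, hd⟩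
        · intro i hi
          simp only [blowF, if_neg (fun h => hi ((mem_lowSet i).mpr h))]
        · intro i _; rfl
      · rw [if_neg hd] at hx
        exact absurd hx (Finset.notMem_empty x)
  have hcu := Finset.card_union_add_card_inter (S1.erase 0) S2
  rw [hI] at hcu
  have hIcard : (if ip u (blowF n m) = c then ({blowF n m} : Finset (Fin n → ZMod 2))
      else ∅).card = if ip u (blowF n m) = c then 1 else 0 := by
    by_cases hd : ip u (blowF n m) = c <;> simp [hd]
  rw [hIcard] at hcu
  have hE : (S1.erase 0).card + (if c = 0 then 1 else 0) = S1.card := by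
    by_cases hc : c = 0
    · rw [if_pos hc]
      apply Finset.card_erase_add_one
      simp only [hS1, Finset.mem_filter, Finset.mem_univ, true_and]
      exact ⟨fun i _ => rfl, by rw [ip_zero_right, hc]⟩
    · rw [if_neg hc, add_zero]
      congr 1
      apply Finset.erase_eq_of_notMem
      simp only [hS1, Finset.mem_filter, Finset.mem_univ, true_and, not_and]
      intro _
      rw [ip_zero_right]
      exact fun h => hc h.symm
  rw [hF]
  -- combine: |F| + [d=c] = |erase| + |S2|  and  |erase| + [c=0] = |S1|
  have := hcu
  omega

/-- **Theorem 5.5(2).**  Let `1 ≤ m < n`, `∅ ≠ B ⊆ [n] ∖ [m]`, and let `f` be the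
indicator of the nonempty down-closed subsets of `ℍ(m,n)` contained in `[m] ∪ B`.
Then: `wt(c_f(0,0)) = 0`; `wt(c_f(0,u)) = 2^{n−1}` for `u ≠ 0`;
`wt(c_f(1,0)) = 2^m + 2^{|B|} − 2`; and for nonzero `u = (v,w)`,
`wt(c_f(1,u)) = 2^{n−1} − 1 + 2^m·χ₀ + (−1)^{wt(v)}·(2^{|B|}·χ_B − 1)`. -/
theorem stmt_9 (n m : ℕ) (hm : 1 ≤ m) (hmn : m < n)
    (B : Finset (Fin n)) (hBne : B.Nonempty) (hB : ∀ j ∈ B, m ≤ (j : ℕ))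
    (f : (Fin n → ZMod 2) → ZMod 2)
    (hf : ∀ x, f x = 1 ↔
      ((supp x).Nonempty ∧ HDownClosed n m (supp x) ∧ supp x ⊆ lowSet n m ∪ B)) :
    wtF f 0 0 = 0
    ∧ (∀ u : Fin n → ZMod 2, u ≠ 0 → wtF f 0 u = 2 ^ (n - 1))
    ∧ (wtF f 1 0 : ℤ) = 2 ^ m + 2 ^ B.card - 2
    ∧ ∀ u : Fin n → ZMod 2, u ≠ 0 →
        (wtF f 1 u : ℤ) =
          2 ^ (n - 1) - 1
          + 2 ^ m * (if ∀ i : Fin n, (i : ℕ) < m → u i = 0 then 1 else 0)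
          + (-1) ^ (wtLow n m u) *
              (2 ^ B.card * (if ∀ j ∈ B, u j = 0 then 1 else 0) - 1) := by
  have hn : 0 < n := lt_of_le_of_lt (Nat.zero_le m) hmn
  have hfne : ∀ x : Fin n → ZMod 2, f x = 1 → x ≠ 0 := by
    intro x hx h0
    obtain ⟨j, hj⟩ := ((hf x).mp hx).1
    rw [h0] at hj
    exact (mem_supp 0 j).mp hj rfl
  have hT1 : ∀ u : Fin n → ZMod 2, u ≠ 0 →
      (Finset.univ.filter (fun x : Fin n → ZMod 2 => ip u x = 1)).card = 2 ^ (n - 1) := by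
    intro u hu
    obtain ⟨j, hj⟩ := Function.ne_iff.mp hu
    have hc := count_ip_ne u j (zmod2_ne_zero (by simpa using hj)) 1
    rw [Fintype.card_fin] at hc
    exact hc
  refine ⟨?_, ?_, ?_, ?_⟩
  · rw [wtF]
    rw [show (Finset.univ.filter
        (fun x : Fin n → ZMod 2 => x ≠ 0 ∧ 0 * f x + ip 0 x = 1)) = ∅ from ?_]
    · exact Finset.card_empty
    · rw [Finset.filter_eq_empty_iff]
      rintro x - ⟨-, h⟩
      rw [zero_mul, ip_zero_left, add_zero] at h
      exact (by decide : ¬ ((0 : ZMod 2) = 1)) h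
  · intro u hu
    have he : Finset.univ.filter (fun x : Fin n → ZMod 2 => x ≠ 0 ∧ 0 * f x + ip u x = 1)
        = Finset.univ.filter (fun x : Fin n → ZMod 2 => ip u x = 1) := by
      ext x
      simp only [Finset.mem_filter, Finset.mem_univ, true_and, zero_mul, zero_add]
      constructor
      · rintro ⟨-, h⟩; exact h
      · intro h
        refine ⟨?_, h⟩
        rintro rfl
        rw [ip_zero_right] at h
        exact (by decide : ¬ ((0 : ZMod 2) = 1)) h
    rw [wtF, he, hT1 u hu]
  · have hstar := star_count hm hmn B hB f hf 0 0
    rw [S1_card (le_of_lt hmn) 0 0, S2_card B hB 0 0, ip_zero_left] at hstar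
    have hv : ∀ i : Fin n, (i : ℕ) < m → (0 : Fin n → ZMod 2) i = 0 := fun _ _ => rfl
    have hw : ∀ j ∈ B, (0 : Fin n → ZMod 2) j = 0 := fun _ _ => rfl
    have t1 : ((0 : ZMod 2) = 0) := rfl
    rw [if_pos hv, if_pos hw, if_pos t1, if_pos t1,
      if_pos (show (0 : ZMod 2) + 0 = 0 from rfl)] at hstar
    have hwt : wtF f 1 0
        = (Finset.univ.filter (fun x : Fin n → ZMod 2 => f x = 1 ∧ ip 0 x = 0)).card := by
      rw [wtF]
      congr 1
      ext x
      simp only [Finset.mem_filter, Finset.mem_univ, true_and, one_mul, ip_zero_left, add_zero]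
      constructor
      · rintro ⟨-, h⟩; exact ⟨h, trivial⟩
      · rintro ⟨h, -⟩; exact ⟨hfne x h, h⟩
    rw [hwt]
    have hz := congrArg (fun t : ℕ => (t : ℤ)) hstar
    push_cast at hz
    linarith
  · intro u hu
    have hsplit1 : wtF f 1 u
        = (Finset.univ.filter (fun x : Fin n → ZMod 2 => f x = 1 ∧ ip u x = 0)).card
        + (Finset.univ.filter (fun x : Fin n → ZMod 2 => ¬ f x = 1 ∧ ip u x = 1)).card := by
      rw [wtF, ← Finset.card_union_of_disjoint]
      · congr 1
        ext x
        simp only [Finset.mem_filter, Finset.mem_univ, true_and, Finset.mem_union, one_mul]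
        constructor
        · rintro ⟨hx0, hsum⟩
          rcases zmod2_or (f x) with h | h <;> rcases zmod2_or (ip u x) with h2 | h2 <;>
              rw [h, h2] at hsum
          · exact absurd hsum (by decide)
          · exact Or.inr ⟨by rw [h]; decide, h2⟩
          · exact Or.inl ⟨h, h2⟩
          · exact absurd hsum (by decide)
        · rintro (⟨h1, h2⟩ | ⟨h1, h2⟩)
          · exact ⟨hfne x h1, by rw [h1, h2]; decide⟩
          · have hfx : f x = 0 := (zmod2_or (f x)).resolve_right h1
            refine ⟨?_, by rw [hfx, h2]; decide⟩
            rintro rfl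
            rw [ip_zero_right] at h2
            exact (by decide : ¬ ((0 : ZMod 2) = 1)) h2
      · rw [Finset.disjoint_left]
        intro x hx hx'
        simp only [Finset.mem_filter] at hx hx'
        exact hx'.2.1 hx.2.1
    have hsplit2 : (Finset.univ.filter (fun x : Fin n → ZMod 2 => ip u x = 1)).card
        = (Finset.univ.filter (fun x : Fin n → ZMod 2 => f x = 1 ∧ ip u x = 1)).card
        + (Finset.univ.filter (fun x : Fin n → ZMod 2 => ¬ f x = 1 ∧ ip u x = 1)).card := by
      rw [← Finset.card_union_of_disjoint]
      · congr 1
        ext x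
        simp only [Finset.mem_filter, Finset.mem_univ, true_and, Finset.mem_union]
        by_cases h : f x = 1 <;> tauto
      · rw [Finset.disjoint_left]
        intro x hx hx'
        simp only [Finset.mem_filter] at hx hx'
        exact hx'.2.1 hx.2.1
    have h0 := star_count hm hmn B hB f hf u 0
    have h1 := star_count hm hmn B hB f hf u 1
    rw [S1_card (le_of_lt hmn) u 0, S2_card B hB u 0] at h0
    rw [S1_card (le_of_lt hmn) u 1, S2_card B hB u 1] at h1
    have t1 : ((0 : ZMod 2) = 0) := rfl
    have t2 : ¬ ((1 : ZMod 2) = 0) := by decide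
    rw [if_pos t1] at h0
    rw [if_neg t2] at h1
    have hTu := hT1 u hu
    rw [hsplit2] at hTu
    -- cast everything to ℤ
    have hz0 := congrArg (fun t : ℕ => (t : ℤ)) h0
    have hz1 := congrArg (fun t : ℕ => (t : ℤ)) h1
    have hzT := congrArg (fun t : ℕ => (t : ℤ)) hTu
    have hzW := congrArg (fun t : ℕ => (t : ℤ)) hsplit1
    push_cast at hz0 hz1 hzT hzW
    rw [hzW]
    clear hz0 hz1
    -- case analysis
    have hdwt : ip u (blowF n m) = ((wtLow n m u : ℕ) : ZMod 2) := ip_blow u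
    rcases Nat.even_or_odd (wtLow n m u) with hpar | hpar
    · have hd0 : ip u (blowF n m) = 0 := by
        rw [hdwt, ZMod.natCast_eq_zero_iff]
        exact hpar.two_dvd
      have hsign : ((-1 : ℤ)) ^ wtLow n m u = 1 := Even.neg_one_pow hpar
      rw [hd0] at h0 h1
      rw [if_pos t1, if_pos (show (0 : ZMod 2) + 0 = 0 from rfl)] at h0
      rw [if_neg (by decide : ¬ ((0 : ZMod 2) = 1)),
        if_neg (by decide : ¬ ((1 : ZMod 2) = 0)),
        if_neg (by decide : ¬ ((1 : ZMod 2) + 0 = 0))] at h1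
      rw [hsign]
      by_cases hv : ∀ i : Fin n, (i : ℕ) < m → u i = 0 <;>
        by_cases hw : ∀ j ∈ B, u j = 0
      · rw [if_pos hv, if_pos hw] at *
        rw [if_pos t1] at h0
        have hz0 := congrArg (fun t : ℕ => (t : ℤ)) h0
        have hz1 := congrArg (fun t : ℕ => (t : ℤ)) h1
        push_cast at hz0 hz1
        linarith
      · rw [if_pos hv, if_neg hw] at *
        rw [if_pos t1] at h0
        have hz0 := congrArg (fun t : ℕ => (t : ℤ)) h0
        have hz1 := congrArg (fun t : ℕ => (t : ℤ)) h1
        push_cast at hz0 hz1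
        linarith
      · rw [if_neg hv, if_pos hw] at *
        have hz0 := congrArg (fun t : ℕ => (t : ℤ)) h0
        have hz1 := congrArg (fun t : ℕ => (t : ℤ)) h1
        push_cast at hz0 hz1
        linarith
      · rw [if_neg hv, if_neg hw] at *
        have hz0 := congrArg (fun t : ℕ => (t : ℤ)) h0
        have hz1 := congrArg (fun t : ℕ => (t : ℤ)) h1
        push_cast at hz0 hz1
        linarith
    · have hd1 : ip u (blowF n m) = 1 := by
        apply zmod2_ne_zero
        rw [hdwt, Ne, ZMod.natCast_eq_zero_iff]
        intro h
        exact (Nat.not_even_iff_odd.mpr hpar) ((even_iff_two_dvd).mpr h)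
      have hsign : ((-1 : ℤ)) ^ wtLow n m u = -1 := Odd.neg_one_pow hpar
      have hv : ¬ ∀ i : Fin n, (i : ℕ) < m → u i = 0 := by
        intro hv
        have hwt0 : wtLow n m u = 0 := by
          rw [wtLow, Finset.card_eq_zero, Finset.filter_eq_empty_iff]
          rintro i - ⟨h1', h2'⟩
          exact h2' (hv i h1')
        rw [hwt0] at hpar
        exact (Nat.not_even_iff_odd.mpr hpar) Even.zero
      rw [hd1] at h0 h1
      rw [if_neg (by decide : ¬ ((1 : ZMod 2) = 0)),
        if_neg (by decide : ¬ ((0 : ZMod 2) + 1 = 0))] at h0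
      rw [if_pos (show (1 : ZMod 2) = 1 from rfl),
        if_neg (by decide : ¬ ((1 : ZMod 2) = 0)),
        if_pos (by decide : ((1 : ZMod 2) + 1 = 0))] at h1
      rw [hsign]
      by_cases hw : ∀ j ∈ B, u j = 0
      · rw [if_neg hv, if_pos hw] at *
        have hz0 := congrArg (fun t : ℕ => (t : ℤ)) h0
        have hz1 := congrArg (fun t : ℕ => (t : ℤ)) h1
        push_cast at hz0 hz1
        linarith
      · rw [if_neg hv, if_neg hw] at *
        have hz0 := congrArg (fun t : ℕ => (t : ℤ)) h0
        have hz1 := congrArg (fun t : ℕ => (t : ℤ)) h1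
        push_cast at hz0 hz1
        linarith
end
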